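/- Let A be a permutation with buffer sequence w = M(A). If w_i < w_{i-1} (the buffer shrinks at stage i), then A_i = ACK_{i-1} (the new element is the smallest previously-missing ID), and all IDs up to ACK_{i-1} + (w_{i-1} - w_i - 1) appear among A_1,...,A_i. -/
import Mathlib


/-- The set of values appearing in the first `i` entries of `A` (indices `1..i`). -/
def prefSet (A : ℕ → ℕ) (i : ℕ) : Finset ℕ := (Finset.Icc 1 i).image A

/-- `H_i`: the maximum value among the first `i` entries (0 for `i = 0`). -/
def hi (A : ℕ → ℕ) (i : ℕ) : ℕ := (prefSet A i).sup id

/-- `ACK_i`: the least positive integer not among the first `i` entries. -/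
noncomputable def ackSeq (A : ℕ → ℕ) (i : ℕ) : ℕ := sInf {k | 0 < k ∧ k ∉ prefSet A i}

/-- The buffer size `M_i = H_i - (ACK_i - 1)`. -/
noncomputable def buf (A : ℕ → ℕ) (i : ℕ) : ℤ := (hi A i : ℤ) - ackSeq A i + 1

/-- `A` restricted to `{1,...,n}` is a permutation of `{1,...,n}`. -/
def IsPermOn (A : ℕ → ℕ) (n : ℕ) : Prop := Set.BijOn A (Set.Icc 1 n) (Set.Icc 1 n)

/-- The positions `1..n` can be partitioned into `k` classes, each of which
induces a strictly increasing subsequence of `A`. -/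
def SUSle (A : ℕ → ℕ) (n k : ℕ) : Prop :=
  ∃ c : ℕ → ℕ, (∀ i ∈ Finset.Icc 1 n, c i < k) ∧
    ∀ i j, i ∈ Finset.Icc 1 n → j ∈ Finset.Icc 1 n → i < j → c i = c j → A i < A j

/-- `SUS(A)`: minimum number of increasing subsequences partitioning `A₁,…,Aₙ`. -/
noncomputable def sus (A : ℕ → ℕ) (n : ℕ) : ℕ := sInf {k | SUSle A n k}

/-- `LDS(A)`: maximum length of a strictly decreasing subsequence of `A₁,…,Aₙ`. -/
noncomputable def lds (A : ℕ → ℕ) (n : ℕ) : ℕ :=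
  sSup {m | ∃ s : Fin m → ℕ, StrictMono s ∧ (∀ t, s t ∈ Finset.Icc 1 n) ∧
    ∀ t u : Fin m, t < u → A (s u) < A (s t)}

lemma ackSet_nonempty (A : ℕ → ℕ) (i : ℕ) : {k | 0 < k ∧ k ∉ prefSet A i}.Nonempty := by
  refine ⟨(prefSet A i).sup id + 1, Nat.succ_pos _, fun h => ?_⟩
  have := Finset.le_sup (f := id) h
  simp only [id] at this
  omega

lemma ack_mem (A : ℕ → ℕ) (i : ℕ) : 0 < ackSeq A i ∧ ackSeq A i ∉ prefSet A i :=
  Nat.sInf_mem (ackSet_nonempty A i)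

lemma lt_ack_mem (A : ℕ → ℕ) (i k : ℕ) (hk : 1 ≤ k) (h : k < ackSeq A i) :
    k ∈ prefSet A i := by
  by_contra hmem
  have : ackSeq A i ≤ k := Nat.sInf_le (show k ∈ {k | 0 < k ∧ k ∉ prefSet A i} from ⟨hk, hmem⟩)
  omega

lemma prefSet_mono (A : ℕ → ℕ) {i j : ℕ} (h : i ≤ j) : prefSet A i ⊆ prefSet A j :=
  Finset.image_subset_image (Finset.Icc_subset_Icc le_rfl h)

lemma ack_mono (A : ℕ → ℕ) {i j : ℕ} (h : i ≤ j) : ackSeq A i ≤ ackSeq A j := by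
  refine Nat.sInf_le ?_
  obtain ⟨h1, h2⟩ := ack_mem A j
  exact ⟨h1, fun hc => h2 (prefSet_mono A h hc)⟩

/-- if the buffer shrinks at stage `i`, then `A_i = ACK_{i-1}` and
every ID `k ≤ ACK_{i-1} + (w_{i-1} - w_i - 1)` appears among `A_1,…,A_i`. -/
theorem buffer_shrinks (n : ℕ) (A : ℕ → ℕ) (hA : IsPermOn A n)
    (i : ℕ) (hi1 : i ∈ Finset.Icc 1 n) (hshrink : buf A i < buf A (i - 1)) :
    A i = ackSeq A (i - 1) ∧
      ∀ k : ℕ, 1 ≤ k → (k : ℤ) ≤ ackSeq A (i - 1) + (buf A (i - 1) - buf A i - 1) →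
        k ∈ prefSet A i := by
  simp only [Finset.mem_Icc] at hi1
  have hmono : hi A (i - 1) ≤ hi A i := Finset.sup_mono (prefSet_mono A (by omega))
  have hbuf := hshrink
  unfold buf at hbuf
  have hack : ackSeq A (i - 1) < ackSeq A i := by
    have := (Nat.cast_le (α := ℤ)).mpr hmono
    have := (Nat.cast_lt (α := ℤ) (m := ackSeq A (i-1)) (n := ackSeq A i))
    omega
  have hackmem : ackSeq A (i - 1) ∈ prefSet A i :=
    lt_ack_mem A i _ (ack_mem A (i-1)).1 hack
  obtain ⟨j, hj, hAj⟩ := Finset.mem_image.mp hackmem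
  simp only [Finset.mem_Icc] at hj
  have hji : j = i := by
    by_contra hne
    have hjm : j ∈ Finset.Icc 1 (i - 1) := Finset.mem_Icc.mpr (by omega)
    exact (ack_mem A (i-1)).2 (Finset.mem_image.mpr ⟨j, hjm, hAj⟩)
  refine ⟨by rw [hji] at hAj; exact hAj, fun k hk1 hk2 => ?_⟩
  refine lt_ack_mem A i k hk1 ?_
  unfold buf at hk2
  have := (Nat.cast_le (α := ℤ)).mpr hmono
  have := (Nat.cast_lt (α := ℤ) (m := k) (n := ackSeq A i))
  omega
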